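/- Abstract K-functional interpolation bound (core of Proposition 5.1, parts 1 and 3): Let X and Z be real normed vector spaces and ι : X → Z a linear map with ‖ι x‖_Z ≤ C_ι ‖x‖_X for all x ∈ X. Fix A > 0, reals 0 < B₀ < B, θ ∈ (0, B₀/(A+B₀)), ε₀ > 0 and c_a, c_e ≥ 0, and set ε_n := 2^{−nθ/B₀} ε₀ for n ∈ ℕ₀. Let λ ∈ Z and suppose that for every n ∈ ℕ₀ there exist a_n ∈ X and e_n ∈ Z with λ = ι a_n + e_n, ‖a_n‖_X ≤ c_a ε_n^{−A} and ‖e_n‖_Z ≤ c_e ε_n^{B}. Then there exists a constant c < ∞, depending only on θ, A, B, B₀ and C_ι (and not on λ, ε₀, c_a, c_e), such that Σ_{n ∈ ℤ} 2^{−nθ} K(2^n, λ) ≤ c · (c_a ε₀^{−A} + c_e ε₀^{B}); in particular this sum is finite. -/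

import Mathlib

open scoped ENNReal

private lemma aux_ineq1 {p P u v : ℝ} (hp : 0 ≤ p) (hP : 0 ≤ P) (hu : 0 ≤ u) (hv : 0 ≤ v) :
    p * u + v ≤ (p + 1 + P) * (u + v) := by nlinarith

private lemma aux_ineq2 {p P u v : ℝ} (hp : 0 ≤ p) (hP : 0 ≤ P) (hu : 0 ≤ u) (hv : 0 ≤ v) :
    v + u * P ≤ (p + 1 + P) * (u + v) := by nlinarith

set_option maxHeartbeats 2000000 in
/-- Abstract K-functional interpolation bound: given a linear map `ι : X → Z`
between real normed spaces with `‖ι x‖ ≤ C_ι ‖x‖`, parameters `A > 0`,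
`0 < B₀ < B`, `θ ∈ (0, B₀/(A+B₀))`, and for every `n ∈ ℕ` a decomposition
`λ = ι aₙ + eₙ` with `‖aₙ‖ ≤ c_a εₙ^{-A}`, `‖eₙ‖ ≤ c_e εₙ^{B}` along
`εₙ = 2^{-nθ/B₀} ε₀`, the discrete interpolation sum
`Σ_{n ∈ ℤ} 2^{-nθ} K(2ⁿ, λ)` is bounded by `c (c_a ε₀^{-A} + c_e ε₀^{B})`,
with `c` depending only on `θ, A, B, B₀, C_ι`; in particular this sum is
finite.  Here `K(t, z) = inf_x (‖z - ι x‖ + t ‖x‖)`. -/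
theorem abstract_K_interpolation_bound
    (A B B₀ θ Cι : ℝ) (hA : 0 < A) (hB₀ : 0 < B₀) (hB : B₀ < B)
    (hθ : θ ∈ Set.Ioo (0 : ℝ) (B₀ / (A + B₀))) :
    ∃ c : ℝ, ∀ (X Z : Type) [NormedAddCommGroup X] [NormedSpace ℝ X]
      [NormedAddCommGroup Z] [NormedSpace ℝ Z] (ι : X →ₗ[ℝ] Z),
      (∀ x : X, ‖ι x‖ ≤ Cι * ‖x‖) →
      ∀ (ε₀ ca ce : ℝ), 0 < ε₀ → 0 ≤ ca → 0 ≤ ce →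
      ∀ (lam : Z) (a : ℕ → X) (e : ℕ → Z),
      (∀ n : ℕ, lam = ι (a n) + e n) →
      (∀ n : ℕ, ‖a n‖ ≤ ca * ((2 : ℝ) ^ (-(n : ℝ) * θ / B₀) * ε₀) ^ (-A)) →
      (∀ n : ℕ, ‖e n‖ ≤ ce * ((2 : ℝ) ^ (-(n : ℝ) * θ / B₀) * ε₀) ^ B) →
      (∑' n : ℤ, ENNReal.ofReal ((2 : ℝ) ^ (-(n : ℝ) * θ) *
          ⨅ x : X, (‖lam - ι x‖ + (2 : ℝ) ^ (n : ℝ) * ‖x‖))) ≤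
        ENNReal.ofReal (c * (ca * ε₀ ^ (-A) + ce * ε₀ ^ B)) := by
  obtain ⟨hθ0, hθ1⟩ := hθ
  have hB0 : (0:ℝ) < B := hB₀.trans hB
  have hAB : (0:ℝ) < A + B₀ := by linarith
  have hθAB : θ * (A + B₀) < B₀ := (lt_div_iff₀ hAB).mp hθ1
  have hθlt1 : θ < 1 := by nlinarith
  have h1θ : (0:ℝ) < 1 - θ := by linarith
  set s : ℝ := (θ/B + (1-θ)/A)/2 with hs_def
  have hθB_lt : θ/B < (1-θ)/A := by
    rw [div_lt_div_iff₀ hB0 hA]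
    nlinarith [mul_pos (sub_pos.mpr hB) h1θ]
  have hs1 : θ/B < s := by rw [hs_def]; linarith
  have hs2 : s < (1-θ)/A := by rw [hs_def]; linarith
  have hs0 : 0 < s := lt_of_le_of_lt (by positivity) hs1
  set δ₁ : ℝ := s*B - θ with hδ₁def
  set δ₂ : ℝ := 1 - θ - s*A with hδ₂def
  have hδ₁0 : 0 < δ₁ := by
    have := (div_lt_iff₀ hB0).mp hs1
    rw [hδ₁def]; linarith
  have hδ₂0 : 0 < δ₂ := by
    have := (lt_div_iff₀ hA).mp hs2
    rw [hδ₂def]; linarith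
  set δ : ℝ := min θ (min δ₁ δ₂) with hδdef
  have hδ0 : 0 < δ := lt_min hθ0 (lt_min hδ₁0 hδ₂0)
  have hδθ : δ ≤ θ := min_le_left _ _
  have hδ1 : δ ≤ δ₁ := le_trans (min_le_right _ _) (min_le_left _ _)
  have hδ2 : δ ≤ δ₂ := le_trans (min_le_right _ _) (min_le_right _ _)
  set ρ : ℝ := (2:ℝ) ^ (-δ) with hρdef
  have hρ0 : 0 < ρ := Real.rpow_pos_of_pos two_pos _
  have hρ1 : ρ < 1 := Real.rpow_lt_one_of_one_lt_of_neg one_lt_two (by linarith)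
  have hP0 : (0:ℝ) < (2:ℝ) ^ (θ*A/B₀) := Real.rpow_pos_of_pos two_pos _
  set M : ℝ := max Cι 0 + 1 + (2:ℝ) ^ (θ*A/B₀) with hMdef
  have hmax0 : (0:ℝ) ≤ max Cι 0 := le_max_right _ _
  have hM0 : (0:ℝ) ≤ M := by rw [hMdef]; linarith
  refine ⟨M * (2/(1-ρ)), ?_⟩
  intro X Z _ _ _ _ ι hι ε₀ ca ce hε₀ hca hce lam a e hdec ha he
  have _inst : Nonempty X := ⟨0⟩
  set S : ℝ := ca * ε₀ ^ (-A) + ce * ε₀ ^ B with hSdef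
  have hεA : (0:ℝ) < ε₀ ^ (-A) := Real.rpow_pos_of_pos hε₀ _
  have hεB : (0:ℝ) < ε₀ ^ B := Real.rpow_pos_of_pos hε₀ _
  have hS0 : 0 ≤ S := by rw [hSdef]; positivity
  have hbdd : ∀ n : ℤ, BddBelow (Set.range fun x : X =>
      ‖lam - ι x‖ + (2:ℝ)^((n:ℤ):ℝ) * ‖x‖) := by
    intro n
    refine ⟨0, ?_⟩
    rintro y ⟨x, rfl⟩
    have h2 : (0:ℝ) < (2:ℝ)^((n:ℤ):ℝ) := Real.rpow_pos_of_pos two_pos _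
    positivity
  have claim : ∀ n : ℤ, (2:ℝ) ^ (-(n:ℝ)*θ) *
      (⨅ x : X, (‖lam - ι x‖ + (2:ℝ)^((n:ℤ):ℝ) * ‖x‖)) ≤ M * S * ρ ^ n.natAbs := by
    intro n
    have hρpow : ρ ^ n.natAbs = (2:ℝ) ^ (-(n.natAbs:ℝ) * δ) := by
      rw [hρdef, ← Real.rpow_natCast ((2:ℝ)^(-δ)) n.natAbs,
        ← Real.rpow_mul (by norm_num)]
      ring_nf
    rcases le_or_gt 0 n with hn | hn
    · -- nonnegative n : take x = 0
      have hcast : ((n.natAbs:ℝ)) = (n:ℝ) := by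
        rw [Nat.cast_natAbs]
        exact_mod_cast abs_of_nonneg hn
      have hK : (⨅ x : X, (‖lam - ι x‖ + (2:ℝ)^((n:ℤ):ℝ) * ‖x‖)) ≤ ‖lam‖ := by
        have h := ciInf_le (hbdd n) (0:X)
        simpa using h
      have hKnn : 0 ≤ ⨅ x : X, (‖lam - ι x‖ + (2:ℝ)^((n:ℤ):ℝ) * ‖x‖) := by
        refine le_ciInf fun x => ?_
        have h2 : (0:ℝ) < (2:ℝ)^((n:ℤ):ℝ) := Real.rpow_pos_of_pos two_pos _
        positivity
      have h2 : ‖a 0‖ ≤ ca * ε₀ ^ (-A) := by simpa using ha 0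
      have h3 : ‖e 0‖ ≤ ce * ε₀ ^ B := by simpa using he 0
      have hlam : ‖lam‖ ≤ max Cι 0 * (ca * ε₀ ^ (-A)) + ce * ε₀ ^ B := by
        rw [hdec 0]
        have h1 : ‖ι (a 0)‖ ≤ max Cι 0 * ‖a 0‖ :=
          (hι (a 0)).trans (mul_le_mul_of_nonneg_right (le_max_left _ _) (norm_nonneg _))
        calc ‖ι (a 0) + e 0‖ ≤ ‖ι (a 0)‖ + ‖e 0‖ := norm_add_le _ _
          _ ≤ max Cι 0 * (ca * ε₀ ^ (-A)) + ce * ε₀ ^ B := by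
            have := mul_le_mul_of_nonneg_left h2 hmax0
            linarith
      have hexp : (2:ℝ) ^ (-(n:ℝ)*θ) ≤ ρ ^ n.natAbs := by
        rw [hρpow, hcast]
        apply Real.rpow_le_rpow_of_exponent_le one_le_two
        have hn' : (0:ℝ) ≤ (n:ℝ) := by exact_mod_cast hn
        linarith [mul_nonneg hn' (sub_nonneg.mpr hδθ)]
      calc (2:ℝ) ^ (-(n:ℝ)*θ) * (⨅ x : X, (‖lam - ι x‖ + (2:ℝ)^((n:ℤ):ℝ) * ‖x‖))
          ≤ ρ ^ n.natAbs * (max Cι 0 * (ca * ε₀ ^ (-A)) + ce * ε₀ ^ B) :=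
            mul_le_mul hexp (hK.trans hlam) hKnn (pow_nonneg hρ0.le _)
        _ ≤ ρ ^ n.natAbs * (M * S) := by
            apply mul_le_mul_of_nonneg_left _ (pow_nonneg hρ0.le _)
            have e1 : 0 ≤ ca * ε₀ ^ (-A) := by positivity
            have e2 : 0 ≤ ce * ε₀ ^ B := by positivity
            rw [hMdef, hSdef]
            exact aux_ineq1 hmax0 hP0.le e1 e2
        _ = M * S * ρ ^ n.natAbs := by ring
    · -- negative n
      have hN : (0:ℝ) < -(n:ℝ) := by
        have : (n:ℝ) < 0 := by exact_mod_cast hn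
        linarith
      have hcast : ((n.natAbs:ℝ)) = -(n:ℝ) := by
        rw [Nat.cast_natAbs]
        exact_mod_cast abs_of_nonpos hn.le
      set r : ℝ := (-(n:ℝ)) * (s*B₀/θ) with hrdef
      have hr0 : 0 ≤ r := by rw [hrdef]; positivity
      set m : ℕ := ⌈r⌉₊ with hmdef
      have hm1 : r ≤ (m:ℝ) := Nat.le_ceil r
      have hm2 : (m:ℝ) ≤ r + 1 := (Nat.ceil_lt_add_one hr0).le
      -- clear denominators
      have h1 : (-(n:ℝ))*(s*B₀) ≤ (m:ℝ)*θ := by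
        have h := mul_le_mul_of_nonneg_right hm1 hθ0.le
        rw [hrdef] at h
        calc (-(n:ℝ))*(s*B₀) = (-(n:ℝ)) * (s*B₀/θ) * θ := by field_simp
          _ ≤ (m:ℝ)*θ := h
      have h2 : (m:ℝ)*θ ≤ (-(n:ℝ))*(s*B₀) + θ := by
        have h := mul_le_mul_of_nonneg_right hm2 hθ0.le
        rw [hrdef] at h
        calc (m:ℝ)*θ ≤ ((-(n:ℝ)) * (s*B₀/θ) + 1) * θ := h
          _ = (-(n:ℝ))*(s*B₀) + θ := by field_simp
      have hExpE : -(n:ℝ)*θ + (-(m:ℝ)*θ/B₀*B) ≤ (n:ℝ)*δ := by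
        have key : -((m:ℝ)*θ*B) ≤ ((n:ℝ)*δ + (n:ℝ)*θ)*B₀ := by
          have hh := mul_le_mul_of_nonneg_right h1 hB0.le
          have hprod : 0 ≤ (-(n:ℝ)) * B₀ * (δ₁ - δ) :=
            mul_nonneg (mul_nonneg hN.le hB₀.le) (by linarith)
          rw [hδ₁def] at hprod
          linarith [hh, hprod]
        calc -(n:ℝ)*θ + (-(m:ℝ)*θ/B₀*B) = -(n:ℝ)*θ + (-((m:ℝ)*θ*B))/B₀ := by ring
          _ ≤ -(n:ℝ)*θ + (((n:ℝ)*δ + (n:ℝ)*θ)*B₀)/B₀ := by gcongr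
          _ = (n:ℝ)*δ := by field_simp; ring
      have hExpA : -(n:ℝ)*θ + (n:ℝ) + (-(m:ℝ)*θ/B₀*(-A)) ≤ (n:ℝ)*δ + θ*A/B₀ := by
        have key : -(n:ℝ)*θ*B₀ + (n:ℝ)*B₀ + (m:ℝ)*θ*A ≤ (n:ℝ)*δ*B₀ + θ*A := by
          have hh := mul_le_mul_of_nonneg_right h2 hA.le
          have hprod : 0 ≤ (-(n:ℝ)) * B₀ * (δ₂ - δ) :=
            mul_nonneg (mul_nonneg hN.le hB₀.le) (by linarith)
          rw [hδ₂def] at hprod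
          linarith [hh, hprod]
        calc -(n:ℝ)*θ + (n:ℝ) + (-(m:ℝ)*θ/B₀*(-A))
            = (-(n:ℝ)*θ*B₀ + (n:ℝ)*B₀ + (m:ℝ)*θ*A)/B₀ := by field_simp
          _ ≤ ((n:ℝ)*δ*B₀ + θ*A)/B₀ := by gcongr
          _ = (n:ℝ)*δ + θ*A/B₀ := by field_simp
      have hKle : (⨅ x : X, (‖lam - ι x‖ + (2:ℝ)^((n:ℤ):ℝ) * ‖x‖)) ≤
          ‖e m‖ + (2:ℝ)^((n:ℤ):ℝ) * ‖a m‖ := by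
        have h := ciInf_le (hbdd n) (a m)
        have hlm : lam - ι (a m) = e m := by rw [hdec m]; exact add_sub_cancel_left _ _
        rwa [hlm] at h
      have hmulB : ((2:ℝ)^(-(m:ℝ)*θ/B₀) * ε₀)^B = (2:ℝ)^(-(m:ℝ)*θ/B₀*B) * ε₀^B := by
        rw [Real.mul_rpow (Real.rpow_nonneg (by norm_num) _) hε₀.le,
          ← Real.rpow_mul (by norm_num : (0:ℝ) ≤ 2)]
      have hmulA : ((2:ℝ)^(-(m:ℝ)*θ/B₀) * ε₀)^(-A) =
          (2:ℝ)^(-(m:ℝ)*θ/B₀*(-A)) * ε₀^(-A) := by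
        rw [Real.mul_rpow (Real.rpow_nonneg (by norm_num) _) hε₀.le,
          ← Real.rpow_mul (by norm_num : (0:ℝ) ≤ 2)]
      have he_m : ‖e m‖ ≤ ce * ((2:ℝ)^(-(m:ℝ)*θ/B₀*B) * ε₀^B) := by
        have h := he m; rw [hmulB] at h; exact h
      have ha_m : ‖a m‖ ≤ ca * ((2:ℝ)^(-(m:ℝ)*θ/B₀*(-A)) * ε₀^(-A)) := by
        have h := ha m; rw [hmulA] at h; exact h
      have hrpnn : (0:ℝ) ≤ (2:ℝ) ^ (-(n:ℝ)*θ) := Real.rpow_nonneg (by norm_num) _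
      calc (2:ℝ) ^ (-(n:ℝ)*θ) * (⨅ x : X, (‖lam - ι x‖ + (2:ℝ)^((n:ℤ):ℝ) * ‖x‖))
          ≤ (2:ℝ) ^ (-(n:ℝ)*θ) * (‖e m‖ + (2:ℝ)^((n:ℤ):ℝ) * ‖a m‖) :=
            mul_le_mul_of_nonneg_left hKle hrpnn
        _ ≤ (2:ℝ) ^ (-(n:ℝ)*θ) * (ce * ((2:ℝ)^(-(m:ℝ)*θ/B₀*B) * ε₀^B) +
              (2:ℝ)^((n:ℤ):ℝ) * (ca * ((2:ℝ)^(-(m:ℝ)*θ/B₀*(-A)) * ε₀^(-A)))) := by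
            refine mul_le_mul_of_nonneg_left ?_ hrpnn
            exact add_le_add he_m (mul_le_mul_of_nonneg_left ha_m
              (Real.rpow_nonneg (by norm_num) _))
        _ = ce * ε₀^B * (2:ℝ)^(-(n:ℝ)*θ + (-(m:ℝ)*θ/B₀*B)) +
            ca * ε₀^(-A) * (2:ℝ)^(-(n:ℝ)*θ + (n:ℝ) + (-(m:ℝ)*θ/B₀*(-A))) := by
            simp only [Real.rpow_add two_pos]; ring
        _ ≤ ce * ε₀^B * (2:ℝ)^((n:ℝ)*δ) +
            ca * ε₀^(-A) * (2:ℝ)^((n:ℝ)*δ + θ*A/B₀) := by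
            gcongr <;> exact one_le_two
        _ = (ce * ε₀^B + ca * ε₀^(-A) * (2:ℝ)^(θ*A/B₀)) * (2:ℝ)^((n:ℝ)*δ) := by
            simp only [Real.rpow_add two_pos]; ring
        _ ≤ (M * S) * (2:ℝ)^((n:ℝ)*δ) := by
            refine mul_le_mul_of_nonneg_right ?_ (Real.rpow_nonneg (by norm_num) _)
            have e1 : 0 ≤ ca * ε₀ ^ (-A) := by positivity
            have e2 : 0 ≤ ce * ε₀ ^ B := by positivity
            rw [hMdef, hSdef]
            exact aux_ineq2 hmax0 hP0.le e1 e2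
        _ = M * S * ρ ^ n.natAbs := by
            rw [hρpow, hcast]; ring_nf
  -- geometric sum bound over ℤ
  have hq1 : ENNReal.ofReal ρ < 1 := ENNReal.ofReal_lt_one.mpr hρ1
  have h1ρ : (0:ℝ) < 1 - ρ := by linarith
  have geom : (∑' n : ℤ, (ENNReal.ofReal ρ) ^ n.natAbs) ≤ ENNReal.ofReal (2/(1-ρ)) := by
    rw [tsum_of_nat_of_neg_add_one ENNReal.summable ENNReal.summable]
    have h1 : (∑' k : ℕ, (ENNReal.ofReal ρ) ^ ((k:ℤ)).natAbs) =
        (1 - ENNReal.ofReal ρ)⁻¹ := by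
      simp only [Int.natAbs_natCast]
      exact ENNReal.tsum_geometric _
    have h2 : (∑' k : ℕ, (ENNReal.ofReal ρ) ^ ((-((k:ℤ) + 1)).natAbs)) ≤
        (1 - ENNReal.ofReal ρ)⁻¹ := by
      have : ∀ k : ℕ, ((-((k:ℤ) + 1)).natAbs) = k + 1 := by
        intro k
        omega
      calc (∑' k : ℕ, (ENNReal.ofReal ρ) ^ ((-((k:ℤ) + 1)).natAbs))
          = ∑' k : ℕ, (ENNReal.ofReal ρ) ^ (k + 1) := by
            exact tsum_congr fun k => by rw [this k]
        _ = ENNReal.ofReal ρ * (1 - ENNReal.ofReal ρ)⁻¹ :=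
            ENNReal.tsum_geometric_add_one _
        _ ≤ 1 * (1 - ENNReal.ofReal ρ)⁻¹ := mul_le_mul_left hq1.le _
        _ = (1 - ENNReal.ofReal ρ)⁻¹ := one_mul _
    have hinv : (1 - ENNReal.ofReal ρ)⁻¹ = ENNReal.ofReal ((1-ρ)⁻¹) := by
      rw [← ENNReal.ofReal_one, ← ENNReal.ofReal_sub _ hρ0.le,
        ENNReal.ofReal_inv_of_pos h1ρ]
    calc (∑' k : ℕ, (ENNReal.ofReal ρ) ^ ((k:ℤ)).natAbs) +
          ∑' k : ℕ, (ENNReal.ofReal ρ) ^ ((-((k:ℤ) + 1)).natAbs)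
        ≤ (1 - ENNReal.ofReal ρ)⁻¹ + (1 - ENNReal.ofReal ρ)⁻¹ := add_le_add h1.le h2
      _ = 2 * ENNReal.ofReal ((1-ρ)⁻¹) := by rw [hinv, two_mul]
      _ = ENNReal.ofReal (2 * (1-ρ)⁻¹) := by
          rw [ENNReal.ofReal_mul (by norm_num)]
          norm_num
      _ = ENNReal.ofReal (2/(1-ρ)) := by rw [div_eq_mul_inv]
  calc (∑' n : ℤ, ENNReal.ofReal ((2:ℝ) ^ (-(n:ℝ)*θ) *
        ⨅ x : X, (‖lam - ι x‖ + (2:ℝ)^((n:ℤ):ℝ) * ‖x‖)))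
      ≤ ∑' n : ℤ, ENNReal.ofReal (M * S * ρ ^ n.natAbs) :=
        ENNReal.tsum_le_tsum fun n => ENNReal.ofReal_le_ofReal (claim n)
    _ = ∑' n : ℤ, ENNReal.ofReal (M * S) * (ENNReal.ofReal ρ) ^ n.natAbs := by
        refine tsum_congr fun n => ?_
        rw [ENNReal.ofReal_mul (mul_nonneg hM0 hS0), ENNReal.ofReal_pow hρ0.le]
    _ = ENNReal.ofReal (M * S) * ∑' n : ℤ, (ENNReal.ofReal ρ) ^ n.natAbs :=
        ENNReal.tsum_mul_left
    _ ≤ ENNReal.ofReal (M * S) * ENNReal.ofReal (2/(1-ρ)) := mul_le_mul_right geom _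
    _ = ENNReal.ofReal (M * S * (2/(1-ρ))) :=
        (ENNReal.ofReal_mul (mul_nonneg hM0 hS0)).symm
    _ = ENNReal.ofReal (M * (2/(1-ρ)) * S) := by ring_nf
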